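/- Let H and B be symmetric positive definite real n×n matrices and Σ a positive semidefinite real n×n matrix, and suppose λ_min(H^{1/2} B⁻¹ H^{1/2}) > 1/2. If C is an n×n matrix satisfying B⁻¹ H C + C H B⁻¹ − C = B⁻¹ Σ B⁻¹, then tr(H C) = (1/2)·tr( (I − (1/2)·B^{1/2} H⁻¹ B^{1/2})⁻¹ · B^{−1/2} Σ B^{−1/2} ). -/

import Mathlib

open Matrix

/-- The square root of a positive semidefinite matrix, as `Matrix.PosSemidef.sqrt` was defined
in the older Mathlib (removed since in favour of `CFC.sqrt`). -/
noncomputable def posSemidefSqrt {n : Type*} [Fintype n] [DecidableEq n]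
    {A : Matrix n n ℝ} (hA : A.PosSemidef) : Matrix n n ℝ :=
  (hA.1.eigenvectorUnitary : Matrix n n ℝ) * diagonal ((√·) ∘ hA.1.eigenvalues) *
    (star hA.1.eigenvectorUnitary : Matrix n n ℝ)

lemma posSemidefSqrt_mul_self {n : Type*} [Fintype n] [DecidableEq n]
    {A : Matrix n n ℝ} (hA : A.PosSemidef) : posSemidefSqrt hA * posSemidefSqrt hA = A := by
  unfold posSemidefSqrt
  have hUU' : (star hA.1.eigenvectorUnitary : Matrix n n ℝ) * (hA.1.eigenvectorUnitary : Matrix n n ℝ) = 1 :=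
    (Matrix.mem_unitaryGroup_iff').mp hA.1.eigenvectorUnitary.2
  have hspec := hA.1.spectral_theorem
  have hd : (fun i => ((√·) ∘ hA.1.eigenvalues) i * ((√·) ∘ hA.1.eigenvalues) i)
      = RCLike.ofReal ∘ hA.1.eigenvalues :=
    funext fun i => by simp [Real.mul_self_sqrt (hA.eigenvalues_nonneg i)]
  simp only [Matrix.mul_assoc]
  rw [← Matrix.mul_assoc (star (hA.1.eigenvectorUnitary : Matrix n n ℝ)) _, hUU', Matrix.one_mul,
    ← Matrix.mul_assoc (diagonal _) (diagonal _), diagonal_mul_diagonal, hd, ← Matrix.mul_assoc]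
  exact hspec.symm

set_option maxHeartbeats 1000000 in
/-- With `H`, `B` symmetric positive definite, `Sg` PSD,
`λ_min(H^{1/2} B⁻¹ H^{1/2}) > 1/2`, and `C` satisfying
`B⁻¹ H C + C H B⁻¹ − C = B⁻¹ Sg B⁻¹`, we have
`tr (H C) = (1/2) tr ((I − (1/2) B^{1/2} H⁻¹ B^{1/2})⁻¹ B^{−1/2} Sg B^{−1/2})`. -/
theorem trace_HC_of_annealed_lyapunov {n : ℕ} (hn : 0 < n)
    (H B Sg C : Matrix (Fin n) (Fin n) ℝ)
    (hH : H.PosDef) (hB : B.PosDef) (hSg : Sg.PosSemidef)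
    (hSym : (posSemidefSqrt hH.posSemidef * B⁻¹ * posSemidefSqrt hH.posSemidef).IsHermitian)
    (hmin : 1 / 2 < ⨅ i, hSym.eigenvalues i)
    (heq : B⁻¹ * H * C + C * H * B⁻¹ - C = B⁻¹ * Sg * B⁻¹) :
    (H * C).trace =
      (1 / 2) *
        (((1 : Matrix (Fin n) (Fin n) ℝ) -
              (1 / 2 : ℝ) • (posSemidefSqrt hB.posSemidef * H⁻¹ * posSemidefSqrt hB.posSemidef))⁻¹ *
            ((posSemidefSqrt hB.posSemidef)⁻¹ * Sg * (posSemidefSqrt hB.posSemidef)⁻¹)).trace := by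
  classical
  have hne : Nonempty (Fin n) := Fin.pos_iff_nonempty.mp hn
  set S := posSemidefSqrt hB.posSemidef with hSdef
  set R := posSemidefSqrt hH.posSemidef with hRdef
  have hSS : S * S = B := posSemidefSqrt_mul_self hB.posSemidef
  have hRR : R * R = H := posSemidefSqrt_mul_self hH.posSemidef
  have hdetB : IsUnit B.det := hB.det_pos.ne'.isUnit
  have hdetH : IsUnit H.det := hH.det_pos.ne'.isUnit
  have hdetS : IsUnit S.det := by
    have h2 : S.det * S.det = B.det := by rw [← det_mul, hSS]
    exact isUnit_of_mul_isUnit_left (h2 ▸ hdetB)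
  have hdetR : IsUnit R.det := by
    have h2 : R.det * R.det = H.det := by rw [← det_mul, hRR]
    exact isUnit_of_mul_isUnit_left (h2 ▸ hdetH)
  have hBinv : B⁻¹ = S⁻¹ * S⁻¹ := by rw [← hSS, Matrix.mul_inv_rev]
  have hHinv : H⁻¹ = R⁻¹ * R⁻¹ := by rw [← hRR, Matrix.mul_inv_rev]
  have heig : ∀ i, (1:ℝ)/2 < hSym.eigenvalues i := fun i =>
    hmin.trans_le (ciInf_le (Finite.bddBelow_range _) i)
  set T := R * B⁻¹ * R with hTdef
  set U := (hSym.eigenvectorUnitary : Matrix (Fin n) (Fin n) ℝ) with hUdef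
  have hUU : U * star U = 1 := (Matrix.mem_unitaryGroup_iff).mp hSym.eigenvectorUnitary.2
  have hUU' : star U * U = 1 := (Matrix.mem_unitaryGroup_iff').mp hSym.eigenvectorUnitary.2
  have hWspec : T - (1/2:ℝ) • (1 : Matrix (Fin n) (Fin n) ℝ)
      = U * (diagonal (fun i => hSym.eigenvalues i - 1/2)) * star U := by
    have h1 : T = U * diagonal (RCLike.ofReal ∘ hSym.eigenvalues) * star U :=
      hSym.spectral_theorem
    have h2 : diagonal (fun i => hSym.eigenvalues i - 1/2)
        = diagonal (RCLike.ofReal ∘ hSym.eigenvalues)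
          - (1/2:ℝ) • (1 : Matrix (Fin n) (Fin n) ℝ) := by
      ext i j
      by_cases hij : i = j <;>
        simp [Matrix.diagonal_apply, Matrix.one_apply, hij]
    rw [h2, Matrix.mul_sub, Matrix.sub_mul, ← h1]
    congr 1
    rw [Matrix.mul_smul, Matrix.smul_mul, mul_one, hUU]
  have hdetU : IsUnit U.det :=
    IsUnit.of_mul_eq_one (star U).det (by rw [← det_mul, hUU, det_one])
  have hdetUs : IsUnit (star U).det :=
    IsUnit.of_mul_eq_one U.det (by rw [← det_mul, hUU', det_one])
  have hdetW : IsUnit (T - (1/2:ℝ) • (1 : Matrix (Fin n) (Fin n) ℝ)).det := by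
    rw [hWspec, det_mul, det_mul, det_diagonal]
    refine (hdetU.mul ?_).mul hdetUs
    exact isUnit_iff_ne_zero.mpr (Finset.prod_ne_zero_iff.mpr fun i _ =>
      ne_of_gt (by linarith [heig i]))
  have hKspec : T - (1/2:ℝ) • (1 : Matrix (Fin n) (Fin n) ℝ)
      = R * (B⁻¹ - (1/2:ℝ) • H⁻¹) * R := by
    rw [Matrix.mul_sub, Matrix.sub_mul, hTdef]
    congr 1
    rw [Matrix.mul_smul, Matrix.smul_mul, hHinv]
    congr 1
    rw [show R * (R⁻¹ * R⁻¹) * R = R * R⁻¹ * (R⁻¹ * R) from by simp only [Matrix.mul_assoc],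
      mul_nonsing_inv _ hdetR, nonsing_inv_mul _ hdetR, one_mul]
  have hdetK : IsUnit (B⁻¹ - (1/2:ℝ) • H⁻¹).det := by
    rw [hKspec, det_mul, det_mul] at hdetW
    exact isUnit_of_mul_isUnit_right (isUnit_of_mul_isUnit_left hdetW)
  have hHBspec : H - (1/2:ℝ) • B = H * (B⁻¹ - (1/2:ℝ) • H⁻¹) * B := by
    rw [Matrix.mul_sub, Matrix.sub_mul]
    congr 1
    · rw [Matrix.mul_assoc, nonsing_inv_mul _ hdetB, mul_one]
    · rw [Matrix.mul_smul, Matrix.smul_mul, mul_nonsing_inv _ hdetH, one_mul]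
  have hdetHB : IsUnit (H - (1/2:ℝ) • B).det := by
    rw [hHBspec, det_mul, det_mul]
    exact (hdetH.mul hdetK).mul hdetB
  set A := S⁻¹ * H * S⁻¹ with hAdef
  set X := S * C * S with hXdef
  set Q := S⁻¹ * Sg * S⁻¹ with hQdef
  set P := A - (1/2:ℝ) • (1 : Matrix (Fin n) (Fin n) ℝ) with hPdef
  have hdetSi : IsUnit (S⁻¹).det := by
    rw [Matrix.det_nonsing_inv]
    exact hdetS.ringInverse
  have hPspec : P = S⁻¹ * (H - (1/2:ℝ) • B) * S⁻¹ := by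
    rw [hPdef, Matrix.mul_sub, Matrix.sub_mul, hAdef]
    congr 1
    rw [Matrix.mul_smul, Matrix.smul_mul]
    congr 1
    rw [← hSS, show S⁻¹ * (S * S) * S⁻¹ = S⁻¹ * S * (S * S⁻¹) from by simp only [Matrix.mul_assoc],
      nonsing_inv_mul _ hdetS, mul_nonsing_inv _ hdetS, one_mul]
  have hdetP : IsUnit P.det := by
    rw [hPspec, det_mul, det_mul]
    exact (hdetSi.mul hdetHB).mul hdetSi
  have key : A * X + X * A - X = Q := by
    have h := congrArg (fun M => S * M * S) heq
    simp only [Matrix.mul_sub, Matrix.sub_mul, Matrix.mul_add, Matrix.add_mul] at h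
    rw [hBinv] at h
    have e1 : S * (S⁻¹ * S⁻¹ * H * C) * S = A * X := by
      rw [hAdef, hXdef,
        show S⁻¹ * H * S⁻¹ * (S * C * S) = S⁻¹ * H * (S⁻¹ * S) * (C * S) from by simp only [Matrix.mul_assoc],
        nonsing_inv_mul _ hdetS, mul_one,
        show S * (S⁻¹ * S⁻¹ * H * C) * S = S * S⁻¹ * (S⁻¹ * H) * (C * S) from by simp only [Matrix.mul_assoc],
        mul_nonsing_inv _ hdetS, one_mul]
    have e2 : S * (C * H * (S⁻¹ * S⁻¹)) * S = X * A := by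
      rw [hAdef, hXdef,
        show S * C * S * (S⁻¹ * H * S⁻¹) = S * C * (S * S⁻¹) * (H * S⁻¹) from by simp only [Matrix.mul_assoc],
        mul_nonsing_inv _ hdetS, mul_one,
        show S * (C * H * (S⁻¹ * S⁻¹)) * S = S * C * (H * S⁻¹) * (S⁻¹ * S) from by simp only [Matrix.mul_assoc],
        nonsing_inv_mul _ hdetS, mul_one]
    have e3 : S * (S⁻¹ * S⁻¹ * Sg * (S⁻¹ * S⁻¹)) * S = Q := by
      rw [hQdef,
        show S * (S⁻¹ * S⁻¹ * Sg * (S⁻¹ * S⁻¹)) * S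
          = S * S⁻¹ * (S⁻¹ * Sg * S⁻¹) * (S⁻¹ * S) from by simp only [Matrix.mul_assoc],
        mul_nonsing_inv _ hdetS, nonsing_inv_mul _ hdetS, one_mul, mul_one]
    rw [e1, e2, e3] at h
    exact h
  have key2 : P * X + X * P = Q := by
    rw [← key, hPdef, Matrix.sub_mul, Matrix.mul_sub, Matrix.smul_mul, Matrix.mul_smul,
      one_mul, mul_one]
    module
  have htrPX : (P * X).trace = (1/2) * Q.trace := by
    have h := congrArg Matrix.trace key2
    rw [Matrix.trace_add, Matrix.trace_mul_comm X P] at h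
    linarith
  have htrX : X.trace = (1/2) * (P⁻¹ * Q).trace := by
    have h : X + P⁻¹ * (X * P) = P⁻¹ * Q := by
      have h := congrArg (fun M => P⁻¹ * M) key2
      simp only [Matrix.mul_add] at h
      rwa [show P⁻¹ * (P * X) = P⁻¹ * P * X from by rw [Matrix.mul_assoc],
        nonsing_inv_mul _ hdetP, one_mul] at h
    have h2 := congrArg Matrix.trace h
    rw [Matrix.trace_add, Matrix.trace_mul_comm P⁻¹ (X * P),
      show X * P * P⁻¹ = X * (P * P⁻¹) from by rw [Matrix.mul_assoc],
      mul_nonsing_inv _ hdetP, mul_one] at h2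
    linarith
  have hLHS : (H * C).trace = (P * X).trace + (1/2) * X.trace := by
    have hAX : A * X = S⁻¹ * (H * C * S) := by
      rw [hAdef, hXdef,
        show S⁻¹ * H * S⁻¹ * (S * C * S) = S⁻¹ * H * (S⁻¹ * S) * (C * S) from by simp only [Matrix.mul_assoc],
        nonsing_inv_mul _ hdetS, mul_one]
      simp only [Matrix.mul_assoc]
    have h1 : (A * X).trace = (H * C).trace := by
      rw [hAX, Matrix.trace_mul_comm,
        show H * C * S * S⁻¹ = H * C * (S * S⁻¹) from by rw [Matrix.mul_assoc],
        mul_nonsing_inv _ hdetS, mul_one]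
    have h2 : A * X = P * X + (1/2:ℝ) • X := by
      rw [hPdef, Matrix.sub_mul, Matrix.smul_mul, one_mul]
      module
    rw [← h1, h2, Matrix.trace_add, Matrix.trace_smul]
    simp [smul_eq_mul]
  have hGinv : ((1 : Matrix (Fin n) (Fin n) ℝ) - (1/2:ℝ) • (S * H⁻¹ * S))⁻¹ = A * P⁻¹ := by
    apply Matrix.inv_eq_right_inv
    have hSH : S * H⁻¹ * S * A = 1 := by
      rw [hAdef,
        show S * H⁻¹ * S * (S⁻¹ * H * S⁻¹) = S * H⁻¹ * (S * S⁻¹) * H * S⁻¹ from by simp only [Matrix.mul_assoc],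
        mul_nonsing_inv _ hdetS, mul_one,
        show S * H⁻¹ * H * S⁻¹ = S * (H⁻¹ * H) * S⁻¹ from by simp only [Matrix.mul_assoc],
        nonsing_inv_mul _ hdetH, mul_one, mul_nonsing_inv _ hdetS]
    have hGA : ((1 : Matrix (Fin n) (Fin n) ℝ) - (1/2:ℝ) • (S * H⁻¹ * S)) * A = P := by
      rw [Matrix.sub_mul, one_mul, Matrix.smul_mul, hSH, hPdef]
    rw [← Matrix.mul_assoc, hGA, mul_nonsing_inv _ hdetP]
  have hAPi : A * P⁻¹ = 1 + (1/2:ℝ) • P⁻¹ := by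
    have hA' : A = P + (1/2:ℝ) • (1 : Matrix (Fin n) (Fin n) ℝ) := by
      rw [hPdef]; module
    rw [hA', Matrix.add_mul, Matrix.smul_mul, one_mul, mul_nonsing_inv _ hdetP]
  rw [hGinv, hAPi, Matrix.add_mul, one_mul, Matrix.smul_mul, Matrix.trace_add,
    Matrix.trace_smul, hLHS, htrPX, htrX]
  simp only [smul_eq_mul]
  ring
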